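/- If all pairwise greatest common divisors gcd(a_s, a_t) for 1 ≤ s < t ≤ k+1 are equewie—equal to one common value—then there exists an integer c such that for every i with 1 ≤ i ≤ k, a_{i+1} divides c − a_i; that is, there is a single integer c lying in every set 𝐜₁, 𝐜₂, …, 𝐜_k. -/
import Mathlib

/-- Chinese remainder theorem for a finite family of pairwise coprime moduli,
in integer congruence form. -/
lemma crt_aux (b : ℕ → ℕ) (r : ℕ → ℤ) :
    ∀ n : ℕ, (∀ i j, 1 ≤ i → i < j → j ≤ n → Nat.Coprime (b i) (b j)) →
    ∃ y : ℤ, ∀ i, 1 ≤ i → i ≤ n → (b i : ℤ) ∣ (y - r i) := by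
  intro n
  induction n with
  | zero => intro _; exact ⟨0, fun i h1 h2 => by omega⟩
  | succ n ih =>
    intro hcop
    obtain ⟨y, hy⟩ := ih (fun i j h1 h2 h3 => hcop i j h1 h2 (by omega))
    have hc : Nat.Coprime (∏ i ∈ Finset.Icc 1 n, b i) (b (n + 1)) := by
      apply Nat.Coprime.prod_left
      intro i hi
      simp only [Finset.mem_Icc] at hi
      exact hcop i (n + 1) hi.1 (by omega) le_rfl
    have hic : IsCoprime ((∏ i ∈ Finset.Icc 1 n, b i : ℕ) : ℤ) ((b (n + 1) : ℕ) : ℤ) :=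
      Nat.isCoprime_iff_coprime.mpr hc
    obtain ⟨u, v, huv⟩ := hic
    set P : ℤ := ((∏ i ∈ Finset.Icc 1 n, b i : ℕ) : ℤ) with hP
    refine ⟨y + P * (u * (r (n + 1) - y)), fun i h1 h2 => ?_⟩
    rcases Nat.lt_or_ge i (n + 1) with hlt | hge
    · have hdvdP : (b i : ℤ) ∣ P := by
        rw [hP]
        push_cast
        exact Finset.dvd_prod_of_mem _ (Finset.mem_Icc.mpr ⟨h1, by omega⟩)
      have := hy i h1 (by omega)
      have : (b i : ℤ) ∣ (y - r i) + P * (u * (r (n + 1) - y)) :=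
        dvd_add this (Dvd.dvd.mul_right hdvdP _)
      convert this using 1; ring
    · have hi : i = n + 1 := by omega
      subst hi
      have : y + P * (u * (r (n + 1) - y)) - r (n + 1)
          = (y - r (n + 1)) * (v * (b (n + 1) : ℤ)) := by
        linear_combination (r (n + 1) - y) * huv
      rw [this]
      exact Dvd.dvd.mul_left (Dvd.dvd.mul_left dvd_rfl v) _

/-- If all pairwise gcds of `a 1, …, a (k+1)` are equal to one common value, then there
exists an integer `c` lying in every set `𝐜ᵢ`, i.e. with `a (i+1) ∣ (c - a i)` for all
`1 ≤ i ≤ k`. -/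
theorem exists_common_c_of_pairwise_gcd_eq
    (a : ℕ → ℕ) (k : ℕ) (hk : 1 ≤ k)
    (hb : 1 ≤ a 2) (hab : a 2 < a 1)
    (hrec : ∀ i, 1 ≤ i → i ≤ k → a (i + 2) = a i % a (i + 1))
    (hpos : 0 < a (k + 1)) (hzero : a (k + 2) = 0)
    (hgcd : ∃ g : ℕ, ∀ s t, 1 ≤ s → s < t → t ≤ k + 1 → Nat.gcd (a s) (a t) = g) :
    ∃ c : ℤ, ∀ i, 1 ≤ i → i ≤ k → (a (i + 1) : ℤ) ∣ (c - (a i : ℤ)) := by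
  obtain ⟨g, hg⟩ := hgcd
  -- g = a (k+1)
  have hAk : a (k + 1) ∣ a k := by
    have h1 := hrec k hk le_rfl
    rw [hzero] at h1
    exact Nat.dvd_of_mod_eq_zero h1.symm
  have hgk : g = a (k + 1) := by
    rw [← hg k (k + 1) hk (by omega) le_rfl]
    exact Nat.gcd_eq_right hAk
  have hgpos : 0 < g := hgk ▸ hpos
  -- g divides all a s for 1 ≤ s ≤ k+1
  have hdvd : ∀ s, 1 ≤ s → s ≤ k + 1 → g ∣ a s := by
    intro s h1 h2
    rcases Nat.lt_or_ge s (k + 1) with hlt | hge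
    · rw [← hg s (k + 1) h1 hlt le_rfl]
      exact Nat.gcd_dvd_left _ _
    · have : s = k + 1 := by omega
      rw [this, hgk]
  -- the divided moduli are pairwise coprime
  have hcop : ∀ i j, 1 ≤ i → i < j → j ≤ k →
      Nat.Coprime (a (i + 1) / g) (a (j + 1) / g) := by
    intro i j h1 h2 h3
    have hgij : Nat.gcd (a (i + 1)) (a (j + 1)) = g :=
      hg (i + 1) (j + 1) (by omega) (by omega) (by omega)
    have := Nat.coprime_div_gcd_div_gcd (m := a (i + 1)) (n := a (j + 1))
      (hgij ▸ hgpos)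
    rwa [hgij] at this
  obtain ⟨y, hy⟩ := crt_aux (fun i => a (i + 1) / g) (fun i => ((a i / g : ℕ) : ℤ)) k hcop
  refine ⟨(g : ℤ) * y, fun i h1 h2 => ?_⟩
  have hda : g ∣ a i := hdvd i h1 (by omega)
  have hda' : g ∣ a (i + 1) := hdvd (i + 1) (by omega) (by omega)
  have hkey : (a (i + 1) / g : ℤ) ∣ (y - (a i / g : ℕ)) := hy i h1 h2
  have h1' : (a (i + 1) : ℤ) = (g : ℤ) * ((a (i + 1) / g : ℕ) : ℤ) := by
    rw [← Nat.cast_mul, Nat.mul_div_cancel' hda']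
  have h2' : ((a i : ℕ) : ℤ) = (g : ℤ) * ((a i / g : ℕ) : ℤ) := by
    rw [← Nat.cast_mul, Nat.mul_div_cancel' hda]
  rw [h1', h2']
  have : (g : ℤ) * y - (g : ℤ) * ((a i / g : ℕ) : ℤ)
      = (g : ℤ) * (y - ((a i / g : ℕ) : ℤ)) := by ring
  rw [this]
  exact mul_dvd_mul_left _ hkey
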